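/- arXiv:2306.01946 — 2 statements merged into one kernel-verified Lean document; each statement's English description precedes it below -/
import Mathlib

section
/- Let (v^k) be generated by v^{k+1} = v^k − τ⟨Av^k − b, Ax⟩x with v^0 = 0, τ = 1/(c‖A‖²), and x sampled i.i.d. isotropic with E(xxᵀ‖x‖²)=c I_d. Then min_{0 ≤ k ≤ N−1} E(‖Aᵀ(Av^k − b)‖²) ≤ c‖A‖²‖b‖²/N. -/
open MeasureTheory ProbabilityTheory Matrix

/-- The spectral (operator) norm of a matrix. -/
noncomputable def matrixOpNorm {m d : ℕ} (A : Matrix (Fin m) (Fin d) ℝ) : ℝ :=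
  ‖LinearMap.toContinuousLinearMap (Matrix.toEuclideanLin A)‖

section sgdasHelpers

variable {α : Type*} [MeasurableSpace α] {n m d : ℕ}

lemma sgdas_dot_nonneg (u : Fin n → ℝ) : 0 ≤ u ⬝ᵥ u :=
  Finset.sum_nonneg fun _ _ => mul_self_nonneg _

lemma sgdas_sq_le_dot (u : Fin n → ℝ) (i : Fin n) : u i * u i ≤ u ⬝ᵥ u :=
  Finset.single_le_sum (fun j _ => mul_self_nonneg (u j)) (Finset.mem_univ i)

lemma sgdas_absmul_le_dot (u : Fin n → ℝ) (i j : Fin n) : |u i * u j| ≤ u ⬝ᵥ u := by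
  have h1 := sgdas_sq_le_dot u i
  have h2 := sgdas_sq_le_dot u j
  rw [abs_mul]
  nlinarith [abs_nonneg (u i), abs_nonneg (u j), abs_mul_abs_self (u i), abs_mul_abs_self (u j),
    sq_nonneg (|u i| - |u j|)]

lemma sgdas_meas_dotvec {f g : α → Fin n → ℝ} (hf : Measurable f) (hg : Measurable g) :
    Measurable fun a => f a ⬝ᵥ g a := by
  simp only [dotProduct]
  exact Finset.measurable_sum _ fun j _ =>
    ((measurable_pi_apply j).comp hf).mul ((measurable_pi_apply j).comp hg)

lemma sgdas_meas_mulVec (A : Matrix (Fin m) (Fin d) ℝ) {f : α → Fin d → ℝ} (hf : Measurable f) :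
    Measurable fun a => A.mulVec (f a) :=
  measurable_pi_lambda _ fun _ => sgdas_meas_dotvec measurable_const hf

lemma sgdas_meas_pi_sub {f g : α → Fin n → ℝ} (hf : Measurable f) (hg : Measurable g) :
    Measurable fun a => f a - g a :=
  measurable_pi_lambda _ fun i => by
    exact (((measurable_pi_apply i).comp hf).sub ((measurable_pi_apply i).comp hg))

lemma sgdas_meas_step (A : Matrix (Fin m) (Fin d) ℝ) (b : Fin m → ℝ) (τ : ℝ)
    {f g : α → Fin d → ℝ} (hf : Measurable f) (hg : Measurable g) :
    Measurable fun a => f a - τ • (((A.mulVec (f a) - b) ⬝ᵥ A.mulVec (g a)) • g a) := by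
  have hs : Measurable fun a => (A.mulVec (f a) - b) ⬝ᵥ A.mulVec (g a) :=
    sgdas_meas_dotvec (sgdas_meas_pi_sub (sgdas_meas_mulVec A hf) measurable_const)
      (sgdas_meas_mulVec A hg)
  apply measurable_pi_lambda _ fun i => ?_
  have : (fun a => (f a - τ • (((A.mulVec (f a) - b) ⬝ᵥ A.mulVec (g a)) • g a)) i)
      = fun a => f a i - τ * (((A.mulVec (f a) - b) ⬝ᵥ A.mulVec (g a)) * g a i) := by
    funext a; simp [smul_eq_mul]
  rw [this]
  exact ((measurable_pi_apply i).comp hf).sub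
    ((measurable_const.mul (hs.mul ((measurable_pi_apply i).comp hg))))

lemma sgdas_opnorm_bound (A : Matrix (Fin m) (Fin d) ℝ) (y : Fin d → ℝ) :
    (A.mulVec y) ⬝ᵥ (A.mulVec y) ≤ matrixOpNorm A ^ 2 * (y ⬝ᵥ y) := by
  have hd : ∀ (k : ℕ) (w : Fin k → ℝ), ‖(WithLp.equiv 2 (Fin k → ℝ)).symm w‖ ^ 2 = w ⬝ᵥ w := by
    intro k w
    rw [EuclideanSpace.norm_eq, Real.sq_sqrt (Finset.sum_nonneg fun i _ => sq_nonneg _)]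
    simp [dotProduct, sq]
  have h1 : ‖(Matrix.toEuclideanLin A) ((WithLp.equiv 2 (Fin d → ℝ)).symm y)‖
      ≤ matrixOpNorm A * ‖(WithLp.equiv 2 (Fin d → ℝ)).symm y‖ := by
    rw [matrixOpNorm]
    exact (LinearMap.toContinuousLinearMap (Matrix.toEuclideanLin A)).le_opNorm _
  have h2 : (Matrix.toEuclideanLin A) ((WithLp.equiv 2 (Fin d → ℝ)).symm y)
      = (WithLp.equiv 2 (Fin m → ℝ)).symm (A.mulVec y) := by
    simp [Matrix.toEuclideanLin_apply]
  rw [h2] at h1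
  have h3 := pow_le_pow_left₀ (norm_nonneg _) h1 2
  rw [hd m (A.mulVec y), mul_pow, hd d y] at h3
  exact h3

lemma sgdas_dot_mulVec_transpose (A : Matrix (Fin m) (Fin d) ℝ) (r : Fin m → ℝ)
    (z : Fin d → ℝ) : r ⬝ᵥ (A *ᵥ z) = (Aᵀ *ᵥ r) ⬝ᵥ z := by
  rw [Matrix.dotProduct_mulVec, Matrix.mulVec_transpose]

lemma sgdas_expand (r w : Fin m → ℝ) (t : ℝ) :
    (r - (t * (r ⬝ᵥ w)) • w) ⬝ᵥ (r - (t * (r ⬝ᵥ w)) • w)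
      = r ⬝ᵥ r - 2 * t * (r ⬝ᵥ w) ^ 2 + t ^ 2 * ((r ⬝ᵥ w) ^ 2 * (w ⬝ᵥ w)) := by
  simp only [sub_dotProduct, dotProduct_sub, smul_dotProduct,
    dotProduct_smul, smul_eq_mul, dotProduct_comm w r]
  ring

lemma sgdas_moment {Ω : Type*} [MeasurableSpace Ω] (μ : Measure Ω)
    (u X : Ω → Fin d → ℝ)
    (hind : IndepFun u X μ)
    (hIuu : ∀ i j, Integrable (fun ω => u ω i * u ω j) μ)
    (ψ : (Fin d → ℝ) → ℝ) (hψ : Measurable ψ)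
    (hintψ : ∀ i j, Integrable (fun ω => X ω i * X ω j * ψ (X ω)) μ)
    (γ : ℝ) (hmom : ∀ i j, ∫ ω, X ω i * X ω j * ψ (X ω) ∂μ = if i = j then γ else 0) :
    Integrable (fun ω => (u ω ⬝ᵥ X ω) ^ 2 * ψ (X ω)) μ ∧
    ∫ ω, (u ω ⬝ᵥ X ω) ^ 2 * ψ (X ω) ∂μ = γ * ∫ ω, u ω ⬝ᵥ u ω ∂μ := by
  have hpt : ∀ ω, (u ω ⬝ᵥ X ω) ^ 2 * ψ (X ω)
      = ∑ i : Fin d, ∑ j : Fin d, (u ω i * u ω j) * (X ω i * X ω j * ψ (X ω)) := by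
    intro ω
    simp only [dotProduct]
    rw [sq, Finset.sum_mul_sum, Finset.sum_mul]
    refine Finset.sum_congr rfl fun i _ => ?_
    rw [Finset.sum_mul]
    exact Finset.sum_congr rfl fun j _ => by ring
  have hindij : ∀ i j : Fin d, IndepFun (fun ω => u ω i * u ω j)
      (fun ω => X ω i * X ω j * ψ (X ω)) μ := by
    intro i j
    exact hind.comp ((measurable_pi_apply i).mul (measurable_pi_apply j))
      (((measurable_pi_apply i).mul (measurable_pi_apply j)).mul hψ)
  have hIterm : ∀ i j : Fin d, Integrable
      (fun ω => (u ω i * u ω j) * (X ω i * X ω j * ψ (X ω))) μ := by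
    intro i j
    exact (hindij i j).integrable_mul (hIuu i j) (hintψ i j)
  constructor
  · have : (fun ω => (u ω ⬝ᵥ X ω) ^ 2 * ψ (X ω))
        = fun ω => ∑ i : Fin d, ∑ j : Fin d, (u ω i * u ω j) * (X ω i * X ω j * ψ (X ω)) :=
      funext hpt
    rw [this]
    exact integrable_finset_sum _ fun i _ => integrable_finset_sum _ fun j _ => hIterm i j
  · calc ∫ ω, (u ω ⬝ᵥ X ω) ^ 2 * ψ (X ω) ∂μ
        = ∫ ω, ∑ i : Fin d, ∑ j : Fin d, (u ω i * u ω j) * (X ω i * X ω j * ψ (X ω)) ∂μ :=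
          integral_congr_ae (Filter.Eventually.of_forall hpt)
      _ = ∑ i : Fin d, ∑ j : Fin d,
            ∫ ω, (u ω i * u ω j) * (X ω i * X ω j * ψ (X ω)) ∂μ := by
          rw [integral_finset_sum _ fun i _ => integrable_finset_sum _ fun j _ => hIterm i j]
          exact Finset.sum_congr rfl fun i _ => integral_finset_sum _ fun j _ => hIterm i j
      _ = ∑ i : Fin d, ∑ j : Fin d,
            (∫ ω, u ω i * u ω j ∂μ) * (if i = j then γ else 0) := by
          refine Finset.sum_congr rfl fun i _ => Finset.sum_congr rfl fun j _ => ?_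
          exact ((ProbabilityTheory.IndepFun.integral_mul_eq_mul_integral (hindij i j) (hIuu i j).aestronglyMeasurable (hintψ i j).aestronglyMeasurable)).trans
            (by rw [hmom i j])
      _ = ∑ i : Fin d, (∫ ω, u ω i * u ω i ∂μ) * γ := by
          refine Finset.sum_congr rfl fun i _ => ?_
          rw [Finset.sum_eq_single i]
          · simp
          · intro j _ hj; simp [Ne.symm hj]
          · intro h; exact absurd (Finset.mem_univ i) h
      _ = γ * ∫ ω, u ω ⬝ᵥ u ω ∂μ := by
          rw [← Finset.sum_mul, mul_comm]
          congr 1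
          rw [← integral_finset_sum _ (fun i _ => hIuu i i)]
          rfl

end sgdasHelpers

/-- SGDAS with `v^0 = 0`, constant step `τ = 1/(c‖A‖²)` and i.i.d. isotropic
directions with `E(xxᵀ‖x‖²) = cI` satisfies
`min_{0 ≤ k ≤ N−1} E(‖Aᵀ(Av^k − b)‖²) ≤ c‖A‖²‖b‖²/N`. -/
theorem sgdas_sublinear_normal_equation_residual
    {d m : ℕ} {Ω : Type*} [MeasurableSpace Ω] (μ : Measure Ω) [IsProbabilityMeasure μ]
    (A : Matrix (Fin m) (Fin d) ℝ) (b : Fin m → ℝ) (c : ℝ) (hc : 0 < c)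
    (x : ℕ → Ω → Fin d → ℝ)
    (hxmeas : ∀ k, Measurable (x k))
    (hindep : iIndepFun x μ)
    (hint2 : ∀ k i j, Integrable (fun ω => x k ω i * x k ω j) μ)
    (hint4 : ∀ k i j, Integrable (fun ω => x k ω i * x k ω j * (x k ω ⬝ᵥ x k ω)) μ)
    (hiso : ∀ k i j, ∫ ω, x k ω i * x k ω j ∂μ = if i = j then (1 : ℝ) else 0)
    (h4 : ∀ k i j, ∫ ω, x k ω i * x k ω j * (x k ω ⬝ᵥ x k ω) ∂μ = if i = j then c else 0)
    (τ : ℝ) (hτ : τ = 1 / (c * matrixOpNorm A ^ 2))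
    (v : ℕ → Ω → Fin d → ℝ)
    (hv0 : ∀ ω, v 0 ω = 0)
    (hstep : ∀ k ω, v (k + 1) ω
        = v k ω - τ • (((A.mulVec (v k ω) - b) ⬝ᵥ A.mulVec (x k ω)) • x k ω))
    (hintR : ∀ k, Integrable
        (fun ω => (A.mulVec (v k ω) - b) ⬝ᵥ (A.mulVec (v k ω) - b)) μ)
    (hintN : ∀ k, Integrable
        (fun ω => (Aᵀ.mulVec (A.mulVec (v k ω) - b)) ⬝ᵥ (Aᵀ.mulVec (A.mulVec (v k ω) - b))) μ)
    (N : ℕ) (hN : 0 < N) :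
    ∃ k < N, ∫ ω, (Aᵀ.mulVec (A.mulVec (v k ω) - b)) ⬝ᵥ
          (Aᵀ.mulVec (A.mulVec (v k ω) - b)) ∂μ
        ≤ c * matrixOpNorm A ^ 2 * (b ⬝ᵥ b) / N := by
  -- Degenerate case: `A = 0`.
  by_cases hA : matrixOpNorm A = 0
  · have hA0 : A = 0 := by
      have h1 : LinearMap.toContinuousLinearMap (Matrix.toEuclideanLin A) = 0 :=
        norm_eq_zero.mp hA
      have h2 : Matrix.toEuclideanLin A = 0 := by
        have := congrArg (fun L : EuclideanSpace ℝ (Fin d) →L[ℝ] EuclideanSpace ℝ (Fin m) =>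
          (L : EuclideanSpace ℝ (Fin d) →ₗ[ℝ] EuclideanSpace ℝ (Fin m))) h1
        simpa using this
      have := congrArg (Matrix.toEuclideanLin (𝕜 := ℝ) (m := Fin m) (n := Fin d)).symm h2
      simpa using this
    refine ⟨0, hN, ?_⟩
    have h0 : matrixOpNorm (0 : Matrix (Fin m) (Fin d) ℝ) = 0 := by
      simp [matrixOpNorm]
    simp [hA0, h0, Matrix.zero_mulVec]
  -- Main case.
  have hAnn : (0 : ℝ) < matrixOpNorm A :=
    lt_of_le_of_ne (norm_nonneg _) (Ne.symm hA)
  have hτpos : 0 < τ := by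
    rw [hτ]; positivity
  have hτ1 : τ * (c * matrixOpNorm A ^ 2) = 1 := by
    rw [hτ]; field_simp
  -- Measurability of the iterates.
  have hvmeas : ∀ k, Measurable (v k) := by
    intro k
    induction k with
    | zero =>
      have : v 0 = fun _ => (0 : Fin d → ℝ) := funext hv0
      rw [this]; exact measurable_const
    | succ k ih =>
      have : v (k + 1) = fun ω =>
          v k ω - τ • (((A.mulVec (v k ω) - b) ⬝ᵥ A.mulVec (x k ω)) • x k ω) :=
        funext (hstep k)
      rw [this]
      exact sgdas_meas_step A b τ ih (hxmeas k)
  -- Independence of `v k` and `x k`.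
  have hIndepVX : ∀ k, IndepFun (v k) (x k) μ := by
    have hGex : ∀ k, ∃ G : ((↥(Finset.range k)) → (Fin d → ℝ)) → (Fin d → ℝ),
        Measurable G ∧ ∀ ω, v k ω = G (fun i => x i ω) := by
      intro k
      induction k with
      | zero => exact ⟨fun _ => 0, measurable_const, fun ω => hv0 ω⟩
      | succ k ih =>
        obtain ⟨G, hGm, hGe⟩ := ih
        have hmem : ∀ i : ↥(Finset.range k), (i : ℕ) ∈ Finset.range (k + 1) := fun i =>
          Finset.mem_range.mpr (Nat.lt_succ_of_lt (Finset.mem_range.mp i.2))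
        set res : ((↥(Finset.range (k+1))) → (Fin d → ℝ)) → ((↥(Finset.range k)) → (Fin d → ℝ)) :=
          fun z i => z ⟨i, hmem i⟩ with hres
        have hresm : Measurable res :=
          measurable_pi_lambda _ fun i => measurable_pi_apply _
        refine ⟨fun z => (fun a => G (res a)) z - τ • (((A.mulVec ((fun a => G (res a)) z) - b) ⬝ᵥ
            A.mulVec (z ⟨k, Finset.self_mem_range_succ k⟩)) • z ⟨k, Finset.self_mem_range_succ k⟩),
          ?_, ?_⟩
        · exact sgdas_meas_step A b τ (hGm.comp hresm) (measurable_pi_apply _)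
        · intro ω
          rw [hstep k ω, hGe ω]
    intro k
    obtain ⟨G, hGm, hGe⟩ := hGex k
    have hdisj : Disjoint (Finset.range k) ({k} : Finset ℕ) := by
      simp only [Finset.disjoint_left, Finset.mem_range, Finset.mem_singleton]; omega
    have h := hindep.indepFun_finset (Finset.range k) {k} hdisj hxmeas
    have h2 := h.comp hGm
      (measurable_pi_apply (⟨k, Finset.mem_singleton_self k⟩ : ↥({k} : Finset ℕ)))
    have hv : v k = G ∘ (fun a (i : ↥(Finset.range k)) => x i a) := funext hGe
    rw [hv]
    exact h2
  -- The normal-equation residual process.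
  set U : ℕ → Ω → Fin d → ℝ := fun k ω => Aᵀ.mulVec (A.mulVec (v k ω) - b) with hU
  have humeasφ : Measurable fun y : Fin d → ℝ => Aᵀ.mulVec (A.mulVec y - b) :=
    sgdas_meas_mulVec Aᵀ (sgdas_meas_pi_sub (sgdas_meas_mulVec A measurable_id) measurable_const)
  have humeas : ∀ k, Measurable (U k) := fun k => humeasφ.comp (hvmeas k)
  have hIndepUX : ∀ k, IndepFun (U k) (x k) μ := fun k =>
    (hIndepVX k).comp humeasφ measurable_id
  have hintN' : ∀ k, Integrable (fun ω => U k ω ⬝ᵥ U k ω) μ := fun k => hintN k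
  have hIuu : ∀ k i j, Integrable (fun ω => U k ω i * U k ω j) μ := by
    intro k i j
    refine (hintN' k).mono
      ((((measurable_pi_apply i).comp (humeas k)).mul
        ((measurable_pi_apply j).comp (humeas k))).aestronglyMeasurable)
      (Filter.Eventually.of_forall fun ω => ?_)
    rw [Real.norm_eq_abs, Real.norm_eq_abs, abs_of_nonneg (sgdas_dot_nonneg _)]
    exact sgdas_absmul_le_dot (U k ω) i j
  -- Second and fourth moment identities.
  have hM1 : ∀ k, Integrable (fun ω => (U k ω ⬝ᵥ x k ω) ^ 2) μ ∧
      ∫ ω, (U k ω ⬝ᵥ x k ω) ^ 2 ∂μ = ∫ ω, U k ω ⬝ᵥ U k ω ∂μ := by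
    intro k
    have := sgdas_moment μ (U k) (x k) (hIndepUX k) (hIuu k) (fun _ => (1 : ℝ))
      measurable_const (fun i j => by simpa using hint2 k i j) 1
      (fun i j => by simpa using hiso k i j)
    constructor
    · simpa using this.1
    · have h := this.2
      simpa using h
  have hM2 : ∀ k, Integrable (fun ω => (U k ω ⬝ᵥ x k ω) ^ 2 * (x k ω ⬝ᵥ x k ω)) μ ∧
      ∫ ω, (U k ω ⬝ᵥ x k ω) ^ 2 * (x k ω ⬝ᵥ x k ω) ∂μ = c * ∫ ω, U k ω ⬝ᵥ U k ω ∂μ := by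
    intro k
    exact sgdas_moment μ (U k) (x k) (hIndepUX k) (hIuu k) (fun y => y ⬝ᵥ y)
      (sgdas_meas_dotvec measurable_id measurable_id) (hint4 k) c (h4 k)
  -- Relating the two dot products.
  have hSU : ∀ k ω, (A.mulVec (v k ω) - b) ⬝ᵥ A.mulVec (x k ω) = U k ω ⬝ᵥ x k ω := by
    intro k ω
    rw [sgdas_dot_mulVec_transpose]
  -- Pointwise expansion of the residual at step `k+1`.
  have hpt : ∀ k ω, (A.mulVec (v (k+1) ω) - b) ⬝ᵥ (A.mulVec (v (k+1) ω) - b)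
      = (A.mulVec (v k ω) - b) ⬝ᵥ (A.mulVec (v k ω) - b)
        - 2 * τ * (U k ω ⬝ᵥ x k ω) ^ 2
        + τ ^ 2 * ((U k ω ⬝ᵥ x k ω) ^ 2 * ((A.mulVec (x k ω)) ⬝ᵥ (A.mulVec (x k ω)))) := by
    intro k ω
    rw [hstep k ω]
    have hrw : A.mulVec (v k ω - τ • (((A.mulVec (v k ω) - b) ⬝ᵥ A.mulVec (x k ω)) • x k ω)) - b
        = (A.mulVec (v k ω) - b)
          - (τ * ((A.mulVec (v k ω) - b) ⬝ᵥ A.mulVec (x k ω))) • (A.mulVec (x k ω)) := by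
      rw [Matrix.mulVec_sub, Matrix.mulVec_smul, Matrix.mulVec_smul, smul_smul, sub_right_comm]
    rw [hrw, sgdas_expand, hSU k ω]
  -- Pointwise descent inequality.
  have hle : ∀ k ω, (A.mulVec (v (k+1) ω) - b) ⬝ᵥ (A.mulVec (v (k+1) ω) - b)
      ≤ (A.mulVec (v k ω) - b) ⬝ᵥ (A.mulVec (v k ω) - b)
        - 2 * τ * (U k ω ⬝ᵥ x k ω) ^ 2
        + τ ^ 2 * matrixOpNorm A ^ 2 * ((U k ω ⬝ᵥ x k ω) ^ 2 * (x k ω ⬝ᵥ x k ω)) := by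
    intro k ω
    rw [hpt k ω]
    have h1 := sgdas_opnorm_bound A (x k ω)
    nlinarith [sq_nonneg (U k ω ⬝ᵥ x k ω), sq_nonneg τ,
      mul_le_mul_of_nonneg_left h1 (mul_nonneg (sq_nonneg τ) (sq_nonneg (U k ω ⬝ᵥ x k ω)))]
  -- Expected descent.
  have hdesc : ∀ k, ∫ ω, (A.mulVec (v (k+1) ω) - b) ⬝ᵥ (A.mulVec (v (k+1) ω) - b) ∂μ
      ≤ (∫ ω, (A.mulVec (v k ω) - b) ⬝ᵥ (A.mulVec (v k ω) - b) ∂μ)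
        - τ * ∫ ω, U k ω ⬝ᵥ U k ω ∂μ := by
    intro k
    have hg := hM1 k
    have hh := hM2 k
    have hg2 : Integrable (fun ω => 2 * τ * (U k ω ⬝ᵥ x k ω) ^ 2) μ := hg.1.const_mul _
    have hh2 : Integrable (fun ω =>
        τ ^ 2 * matrixOpNorm A ^ 2 * ((U k ω ⬝ᵥ x k ω) ^ 2 * (x k ω ⬝ᵥ x k ω))) μ :=
      hh.1.const_mul _
    have hfg : Integrable (fun ω => (A.mulVec (v k ω) - b) ⬝ᵥ (A.mulVec (v k ω) - b)
        - 2 * τ * (U k ω ⬝ᵥ x k ω) ^ 2) μ := (hintR k).sub hg2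
    have hint_rhs : Integrable (fun ω =>
        (A.mulVec (v k ω) - b) ⬝ᵥ (A.mulVec (v k ω) - b)
        - 2 * τ * (U k ω ⬝ᵥ x k ω) ^ 2
        + τ ^ 2 * matrixOpNorm A ^ 2 * ((U k ω ⬝ᵥ x k ω) ^ 2 * (x k ω ⬝ᵥ x k ω))) μ :=
      hfg.add hh2
    have hmono := integral_mono (hintR (k+1)) hint_rhs (hle k)
    rw [integral_add hfg hh2, integral_sub (hintR k) hg2, integral_const_mul,
      integral_const_mul, hg.2, hh.2] at hmono
    refine hmono.trans (le_of_eq ?_)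
    linear_combination (τ * ∫ ω, U k ω ⬝ᵥ U k ω ∂μ) * hτ1
  -- Telescoping.
  have hNnn : ∀ k, 0 ≤ ∫ ω, U k ω ⬝ᵥ U k ω ∂μ := fun k =>
    integral_nonneg fun ω => sgdas_dot_nonneg _
  have hRnn : ∀ k, 0 ≤ ∫ ω, (A.mulVec (v k ω) - b) ⬝ᵥ (A.mulVec (v k ω) - b) ∂μ := fun k =>
    integral_nonneg fun ω => sgdas_dot_nonneg _
  have hR0 : ∫ ω, (A.mulVec (v 0 ω) - b) ⬝ᵥ (A.mulVec (v 0 ω) - b) ∂μ = b ⬝ᵥ b := by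
    have h0 : ∀ ω, (A.mulVec (v 0 ω) - b) ⬝ᵥ (A.mulVec (v 0 ω) - b) = b ⬝ᵥ b := by
      intro ω
      rw [hv0 ω]
      simp [Matrix.mulVec_zero]
    calc ∫ ω, (A.mulVec (v 0 ω) - b) ⬝ᵥ (A.mulVec (v 0 ω) - b) ∂μ
        = ∫ _ω, b ⬝ᵥ b ∂μ := integral_congr_ae (Filter.Eventually.of_forall h0)
      _ = b ⬝ᵥ b := by simp
  have htel : ∀ n, (∑ k ∈ Finset.range n, τ * ∫ ω, U k ω ⬝ᵥ U k ω ∂μ)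
      + ∫ ω, (A.mulVec (v n ω) - b) ⬝ᵥ (A.mulVec (v n ω) - b) ∂μ ≤ b ⬝ᵥ b := by
    intro n
    induction n with
    | zero =>
      rw [Finset.range_zero, Finset.sum_empty, zero_add, hR0]
    | succ n ih =>
      rw [Finset.sum_range_succ]
      have := hdesc n
      linarith
  -- Conclusion by contradiction.
  by_contra hcon
  push_neg at hcon
  have hBpos : ∀ k, k < N →
      c * matrixOpNorm A ^ 2 * (b ⬝ᵥ b) / N < ∫ ω, U k ω ⬝ᵥ U k ω ∂μ := by
    intro k hk
    have := hcon k hk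
    simpa [hU] using this
  have hNne : ((N : ℝ)) ≠ 0 := Nat.cast_ne_zero.mpr hN.ne'
  have hsum_lt : ∑ k ∈ Finset.range N, τ * (c * matrixOpNorm A ^ 2 * (b ⬝ᵥ b) / N)
      < ∑ k ∈ Finset.range N, τ * ∫ ω, U k ω ⬝ᵥ U k ω ∂μ := by
    refine Finset.sum_lt_sum_of_nonempty (Finset.nonempty_range_iff.mpr hN.ne') ?_
    intro k hk
    exact mul_lt_mul_of_pos_left (hBpos k (Finset.mem_range.mp hk)) hτpos
  have hconst : ∑ k ∈ Finset.range N, τ * (c * matrixOpNorm A ^ 2 * (b ⬝ᵥ b) / N) = b ⬝ᵥ b := by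
    rw [Finset.sum_const, Finset.card_range, nsmul_eq_mul, hτ]
    field_simp
  have hfin := htel N
  have := hRnn N
  linarith
end

section
/- Under the same setup with constant stepsize 0 < τ < 2/(c‖A‖²), the residuals satisfy E(‖Av^{k+1} − b‖²) ≤ β‖Av^k − b‖² where β = 1 − τ σ_min(A)²(2 − τc‖A‖²), σ_min(A) being the smallest positive singular value; if σ_min(A) > 0 and Av=b is treated with b possibly outside rg A replaced by the consistent case, iterating gives E(‖Av^k − b‖²) ≤ β^k ‖Av^0 − b‖². -/
open MeasureTheory ProbabilityTheory Matrix

/-- The smallest positive singular value of `A`: the infimum of the set of `s > 0` such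
that `s²` is an eigenvalue of `AᵀA`. -/
noncomputable def sigmaMinPos {m d : ℕ} (A : Matrix (Fin m) (Fin d) ℝ) : ℝ :=
  sInf {s : ℝ | 0 < s ∧ ∃ w : Fin d → ℝ, w ≠ 0 ∧ (Aᵀ * A).mulVec w = (s ^ 2) • w}

lemma dot_eq_normsq {n : ℕ} (y : Fin n → ℝ) :
    y ⬝ᵥ y = ‖(WithLp.equiv 2 (Fin n → ℝ)).symm y‖ ^ 2 := by
  rw [← real_inner_self_eq_norm_sq]
  simp only [PiLp.inner_apply, dotProduct, RCLike.inner_apply]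
  simp

lemma opnorm_bound {m d : ℕ} (A : Matrix (Fin m) (Fin d) ℝ) (y : Fin d → ℝ) :
    (A *ᵥ y) ⬝ᵥ (A *ᵥ y) ≤ matrixOpNorm A ^ 2 * (y ⬝ᵥ y) := by
  rw [dot_eq_normsq, dot_eq_normsq, ← mul_pow]
  have h0 : 0 ≤ ‖(WithLp.equiv 2 (Fin m → ℝ)).symm (A *ᵥ y)‖ := norm_nonneg _
  apply pow_le_pow_left₀ h0 ?_ 2
  have := (LinearMap.toContinuousLinearMap (Matrix.toEuclideanLin A)).le_opNorm
      ((WithLp.equiv 2 (Fin d → ℝ)).symm y)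
  have he : (LinearMap.toContinuousLinearMap (Matrix.toEuclideanLin A))
      ((WithLp.equiv 2 (Fin d → ℝ)).symm y) = (WithLp.equiv 2 (Fin m → ℝ)).symm (A *ᵥ y) := by
    simp [Matrix.toEuclideanLin_apply]
  rw [he] at this
  exact this

lemma inner_eq_dot {n : ℕ} (a b : EuclideanSpace ℝ (Fin n)) :
    (inner ℝ a b : ℝ) = (WithLp.equiv 2 (Fin n → ℝ) a) ⬝ᵥ (WithLp.equiv 2 (Fin n → ℝ) b) := by
  simp [PiLp.inner_apply, RCLike.inner_apply, dotProduct, mul_comm]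

lemma dot_self_ASq {m d : ℕ} (A : Matrix (Fin m) (Fin d) ℝ) (r : Fin m → ℝ) :
    (Aᵀ *ᵥ r) ⬝ᵥ (Aᵀ *ᵥ r) = r ⬝ᵥ ((A * Aᵀ) *ᵥ r) := by
  rw [← mulVec_mulVec, dotProduct_mulVec, vecMul_transpose, dotProduct_comm]

lemma sigma_bound {m d : ℕ} (A : Matrix (Fin m) (Fin d) ℝ) (hσ : 0 < sigmaMinPos A)
    (w : Fin d → ℝ) :
    sigmaMinPos A ^ 2 * ((A *ᵥ w) ⬝ᵥ (A *ᵥ w)) ≤ (Aᵀ *ᵥ (A *ᵥ w)) ⬝ᵥ (Aᵀ *ᵥ (A *ᵥ w)) := by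
  classical
  set r : Fin m → ℝ := A *ᵥ w with hr
  have hM : (A * Aᵀ).IsHermitian := by
    have := Matrix.isHermitian_mul_conjTranspose_self A
    simpa using this
  set lam : Fin m → ℝ := hM.eigenvalues with hlam
  have heig : ∀ i, (A * Aᵀ) *ᵥ (WithLp.equiv 2 (Fin m → ℝ) (hM.eigenvectorBasis i))
      = lam i • (WithLp.equiv 2 (Fin m → ℝ) (hM.eigenvectorBasis i)) :=
    fun i => hM.mulVec_eigenvectorBasis i
  set rE : EuclideanSpace ℝ (Fin m) := (WithLp.equiv 2 (Fin m → ℝ)).symm r with hrE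
  set α : Fin m → ℝ := fun i => (WithLp.equiv 2 (Fin m → ℝ) (hM.eigenvectorBasis i)) ⬝ᵥ r with hα
  have hpsd : (A * Aᵀ).PosSemidef := by
    have := Matrix.posSemidef_self_mul_conjTranspose A
    simpa using this
  have hlamnn : ∀ i, 0 ≤ lam i := fun i => hpsd.eigenvalues_nonneg i
  have hkey : ∀ i, lam i ≠ 0 → sigmaMinPos A ^ 2 ≤ lam i := by
    intro i hne
    have hpos : 0 < lam i := lt_of_le_of_ne (hlamnn i) (Ne.symm hne)
    set ui : Fin m → ℝ := WithLp.equiv 2 (Fin m → ℝ) (hM.eigenvectorBasis i) with hui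
    have hwne : Aᵀ *ᵥ ui ≠ 0 := by
      intro h0
      have h1 : (Aᵀ *ᵥ ui) ⬝ᵥ (Aᵀ *ᵥ ui) = lam i * (ui ⬝ᵥ ui) := by
        rw [dot_self_ASq, heig i, dotProduct_smul]; rfl
      have h2 : ui ⬝ᵥ ui = 1 := by
        have h4 := (inner_eq_dot (hM.eigenvectorBasis i) (hM.eigenvectorBasis i)).symm
        rw [real_inner_self_eq_norm_sq, hM.eigenvectorBasis.orthonormal.1 i] at h4
        rw [← hui] at h4
        simpa using h4
      rw [h0] at h1
      simp only [zero_dotProduct, h2, mul_one] at h1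
      exact hne h1.symm
    have hmem : Real.sqrt (lam i) ∈
        {s : ℝ | 0 < s ∧ ∃ w : Fin d → ℝ, w ≠ 0 ∧ (Aᵀ * A).mulVec w = (s ^ 2) • w} := by
      refine ⟨Real.sqrt_pos.mpr hpos, Aᵀ *ᵥ ui, hwne, ?_⟩
      rw [Real.sq_sqrt (hlamnn i)]
      calc (Aᵀ * A) *ᵥ (Aᵀ *ᵥ ui) = Aᵀ *ᵥ ((A * Aᵀ) *ᵥ ui) := by
            rw [mulVec_mulVec, mulVec_mulVec, Matrix.mul_assoc]
        _ = Aᵀ *ᵥ (lam i • ui) := by rw [heig i]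
        _ = lam i • (Aᵀ *ᵥ ui) := mulVec_smul _ _ _
    have hble : BddBelow {s : ℝ | 0 < s ∧ ∃ w : Fin d → ℝ, w ≠ 0 ∧
        (Aᵀ * A).mulVec w = (s ^ 2) • w} := ⟨0, fun s hs => hs.1.le⟩
    have hle : sigmaMinPos A ≤ Real.sqrt (lam i) := csInf_le hble hmem
    calc sigmaMinPos A ^ 2 ≤ Real.sqrt (lam i) ^ 2 := pow_le_pow_left₀ hσ.le hle 2
      _ = lam i := Real.sq_sqrt (hlamnn i)
  have hzero : ∀ i, lam i = 0 → α i = 0 := by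
    intro i h0
    set ui : Fin m → ℝ := WithLp.equiv 2 (Fin m → ℝ) (hM.eigenvectorBasis i) with hui
    have h1 : (Aᵀ *ᵥ ui) ⬝ᵥ (Aᵀ *ᵥ ui) = 0 := by
      rw [dot_self_ASq, heig i, h0, zero_smul, dotProduct_zero]
    have h2 : Aᵀ *ᵥ ui = 0 := by
      funext j
      have hnn : ∀ j, 0 ≤ (Aᵀ *ᵥ ui) j * (Aᵀ *ᵥ ui) j := fun j => mul_self_nonneg _
      have := (Finset.sum_eq_zero_iff_of_nonneg (fun j _ => hnn j)).mp h1 j (Finset.mem_univ j)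
      exact mul_self_eq_zero.mp this
    have h3 : α i = (Aᵀ *ᵥ ui) ⬝ᵥ w := by
      rw [hα, hr]
      show ui ⬝ᵥ (A *ᵥ w) = (Aᵀ *ᵥ ui) ⬝ᵥ w
      rw [dotProduct_mulVec, ← mulVec_transpose]
    rw [h3, h2, zero_dotProduct]
  have hair : ∀ i, (inner ℝ rE (hM.eigenvectorBasis i) : ℝ) = α i := by
    intro i
    rw [inner_eq_dot, hα, hrE]
    simp only [Equiv.apply_symm_apply]
    rw [dotProduct_comm]
  have haii : ∀ i, (inner ℝ (hM.eigenvectorBasis i) rE : ℝ) = α i := by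
    intro i
    rw [inner_eq_dot, hα, hrE]
    simp only [Equiv.apply_symm_apply]
  have hrr : r ⬝ᵥ r = ∑ i, α i * α i := by
    have h1 : (inner ℝ rE rE : ℝ) = r ⬝ᵥ r := by
      rw [inner_eq_dot, hrE]; simp only [Equiv.apply_symm_apply]
    rw [← h1, ← hM.eigenvectorBasis.sum_inner_mul_inner rE rE]
    exact Finset.sum_congr rfl fun i _ => by rw [hair i, haii i]
  have hrMr : r ⬝ᵥ ((A * Aᵀ) *ᵥ r) = ∑ i, lam i * (α i * α i) := by
    have hMrE : r ⬝ᵥ ((A * Aᵀ) *ᵥ r)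
        = (inner ℝ rE ((WithLp.equiv 2 (Fin m → ℝ)).symm ((A * Aᵀ) *ᵥ r)) : ℝ) := by
      rw [inner_eq_dot, hrE]; simp only [Equiv.apply_symm_apply]
    rw [hMrE, ← hM.eigenvectorBasis.sum_inner_mul_inner]
    refine Finset.sum_congr rfl fun i _ => ?_
    have hbM : (inner ℝ (hM.eigenvectorBasis i)
        ((WithLp.equiv 2 (Fin m → ℝ)).symm ((A * Aᵀ) *ᵥ r)) : ℝ) = lam i * α i := by
      rw [inner_eq_dot]
      simp only [Equiv.apply_symm_apply]
      rw [dotProduct_mulVec, ← mulVec_transpose, transpose_mul, transpose_transpose,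
        heig i, smul_dotProduct]
      simp [hα, smul_eq_mul]
    rw [hair i, hbM]
    ring
  rw [dot_self_ASq, hrMr, hrr, Finset.mul_sum]
  apply Finset.sum_le_sum
  intro i _
  rcases eq_or_ne (lam i) 0 with h0 | hne
  · rw [h0, hzero i h0]; simp
  · exact mul_le_mul_of_nonneg_right (hkey i hne) (mul_self_nonneg _)

lemma dotProduct_self_nonneg {n : ℕ} (w : Fin n → ℝ) : 0 ≤ w ⬝ᵥ w :=
  Finset.sum_nonneg fun i _ => mul_self_nonneg _

lemma dotProduct_self_pos {n : ℕ} {w : Fin n → ℝ} (hw : w ≠ 0) : 0 < w ⬝ᵥ w := by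
  rcases (dotProduct_self_nonneg w).lt_or_eq with h | h
  · exact h
  · exfalso
    apply hw
    funext i
    have := (Finset.sum_eq_zero_iff_of_nonneg
      (fun j (_ : j ∈ Finset.univ) => mul_self_nonneg (w j))).mp h.symm i (Finset.mem_univ i)
    exact mul_self_eq_zero.mp this

lemma sigma_set_nonempty {m d : ℕ} (A : Matrix (Fin m) (Fin d) ℝ) (hσ : 0 < sigmaMinPos A) :
    {s : ℝ | 0 < s ∧ ∃ w : Fin d → ℝ, w ≠ 0 ∧ (Aᵀ * A).mulVec w = (s ^ 2) • w}.Nonempty := by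
  by_contra hne
  rw [Set.not_nonempty_iff_eq_empty] at hne
  rw [sigmaMinPos, hne, Real.sInf_empty] at hσ
  exact lt_irrefl 0 hσ

lemma sigma_le_opnorm {m d : ℕ} (A : Matrix (Fin m) (Fin d) ℝ) (hσ : 0 < sigmaMinPos A) :
    sigmaMinPos A ^ 2 ≤ matrixOpNorm A ^ 2 := by
  obtain ⟨s, hs, w, hw, heq⟩ := sigma_set_nonempty A hσ
  have h1 : sigmaMinPos A ≤ s := csInf_le ⟨0, fun t ht => ht.1.le⟩ ⟨hs, w, hw, heq⟩
  have h2 : (A *ᵥ w) ⬝ᵥ (A *ᵥ w) = s ^ 2 * (w ⬝ᵥ w) := by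
    have h := dot_self_ASq Aᵀ w
    rw [transpose_transpose] at h
    rw [h, heq, dotProduct_smul, smul_eq_mul]
  have h3 : (A *ᵥ w) ⬝ᵥ (A *ᵥ w) ≤ matrixOpNorm A ^ 2 * (w ⬝ᵥ w) := opnorm_bound A w
  have hww : 0 < w ⬝ᵥ w := dotProduct_self_pos hw
  have h4 : s ^ 2 ≤ matrixOpNorm A ^ 2 := le_of_mul_le_mul_right (by rw [← h2]; exact h3) hww
  exact le_trans (pow_le_pow_left₀ hσ.le h1 2) h4

lemma dim_pos {m d : ℕ} (A : Matrix (Fin m) (Fin d) ℝ) (hσ : 0 < sigmaMinPos A) : 0 < d := by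
  obtain ⟨s, _, w, hw, _⟩ := sigma_set_nonempty A hσ
  obtain ⟨i, _⟩ := Function.ne_iff.mp hw
  exact i.pos

lemma meas_dot {n : ℕ} {Ω : Type*} [MeasurableSpace Ω] {f g : Ω → Fin n → ℝ}
    (hf : Measurable f) (hg : Measurable g) : Measurable fun ω => f ω ⬝ᵥ g ω := by
  simp only [dotProduct]
  exact Finset.measurable_sum _ fun i _ =>
    ((measurable_pi_apply i).comp hf).mul ((measurable_pi_apply i).comp hg)

lemma meas_mulVec {m n : ℕ} {Ω : Type*} [MeasurableSpace Ω] (A : Matrix (Fin m) (Fin n) ℝ)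
    {f : Ω → Fin n → ℝ} (hf : Measurable f) : Measurable fun ω => A *ᵥ f ω := by
  apply measurable_pi_lambda
  intro i
  simp only [mulVec, dotProduct]
  exact Finset.measurable_sum _ fun j _ =>
    measurable_const.mul ((measurable_pi_apply j).comp hf)

lemma meas_affine {m d : ℕ} {Ω : Type*} [MeasurableSpace Ω] (A : Matrix (Fin m) (Fin d) ℝ)
    (b : Fin m → ℝ) {f : Ω → Fin d → ℝ} (hf : Measurable f) :
    Measurable (fun ω => A *ᵥ f ω - b) := by
  apply measurable_pi_lambda
  intro i
  exact ((measurable_pi_apply i).comp (meas_mulVec A hf)).sub measurable_const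

/-- The SGDAS update step as a function of the pair (current iterate, sample). -/
noncomputable def sgdasStep {m d : ℕ} (A : Matrix (Fin m) (Fin d) ℝ) (b : Fin m → ℝ) (τ : ℝ)
    (p : (Fin d → ℝ) × (Fin d → ℝ)) : Fin d → ℝ :=
  p.1 - τ • (((A *ᵥ p.1 - b) ⬝ᵥ (A *ᵥ p.2)) • p.2)

lemma measurable_sgdasStep {m d : ℕ} (A : Matrix (Fin m) (Fin d) ℝ) (b : Fin m → ℝ) (τ : ℝ) :
    Measurable (sgdasStep A b τ) := by
  apply measurable_pi_lambda
  intro i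
  have hdot : Measurable (fun p : (Fin d → ℝ) × (Fin d → ℝ) =>
      (A *ᵥ p.1 - b) ⬝ᵥ (A *ᵥ p.2)) :=
    meas_dot (meas_affine A b measurable_fst) (meas_mulVec A measurable_snd)
  have : ∀ p : (Fin d → ℝ) × (Fin d → ℝ), sgdasStep A b τ p i
      = p.1 i - τ * (((A *ᵥ p.1 - b) ⬝ᵥ (A *ᵥ p.2)) * p.2 i) := by
    intro p
    simp [sgdasStep, Pi.smul_apply, smul_eq_mul]
  simp only [this]
  exact ((measurable_pi_apply i).comp measurable_fst).sub
    (measurable_const.mul (hdot.mul ((measurable_pi_apply i).comp measurable_snd)))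

open MeasureTheory in
lemma integral_double_sum {Ω : Type*} [MeasurableSpace Ω] (μ : Measure Ω) {n p : ℕ}
    (F : Fin n → Fin p → Ω → ℝ) (hF : ∀ i j, Integrable (F i j) μ) :
    ∫ ω, ∑ i, ∑ j, F i j ω ∂μ = ∑ i, ∑ j, ∫ ω, F i j ω ∂μ := by
  rw [integral_finset_sum _ (fun i _ => integrable_finset_sum _ (fun j _ => hF i j))]
  exact Finset.sum_congr rfl fun i _ => integral_finset_sum _ (fun j _ => hF i j)

lemma dot_expand {n : ℕ} (a y : Fin n → ℝ) (t : ℝ) :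
    (a - t • y) ⬝ᵥ (a - t • y)
      = a ⬝ᵥ a - (2 * t) * (a ⬝ᵥ y) + t ^ 2 * (y ⬝ᵥ y) := by
  simp only [sub_dotProduct, dotProduct_sub, smul_dotProduct, dotProduct_smul, smul_eq_mul]
  rw [dotProduct_comm y a]
  ring

lemma abs_mul_le_add_sq (a b : ℝ) : |a * b| ≤ a * a + b * b :=
  abs_le.mpr ⟨by nlinarith [sq_nonneg (a + b)], by nlinarith [sq_nonneg (a - b)]⟩

lemma step_pointwise {d m : ℕ} (A : Matrix (Fin m) (Fin d) ℝ) (b : Fin m → ℝ) (τ : ℝ)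
    (vv xx : Fin d → ℝ) :
    (A *ᵥ (vv - τ • (((A *ᵥ vv - b) ⬝ᵥ A *ᵥ xx) • xx)) - b) ⬝ᵥ
      (A *ᵥ (vv - τ • (((A *ᵥ vv - b) ⬝ᵥ A *ᵥ xx) • xx)) - b)
    = (A *ᵥ vv - b) ⬝ᵥ (A *ᵥ vv - b)
      - (2 * τ) * (((A *ᵥ vv - b) ⬝ᵥ A *ᵥ xx) * ((A *ᵥ vv - b) ⬝ᵥ A *ᵥ xx))
      + (τ ^ 2) * ((((A *ᵥ vv - b) ⬝ᵥ A *ᵥ xx) * ((A *ᵥ vv - b) ⬝ᵥ A *ᵥ xx))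
          * ((A *ᵥ xx) ⬝ᵥ (A *ᵥ xx))) := by
  have h1 : A *ᵥ (vv - τ • (((A *ᵥ vv - b) ⬝ᵥ A *ᵥ xx) • xx)) - b
      = (A *ᵥ vv - b) - (τ * ((A *ᵥ vv - b) ⬝ᵥ A *ᵥ xx)) • (A *ᵥ xx) := by
    rw [mulVec_sub, mulVec_smul, mulVec_smul, smul_smul, sub_right_comm]
  rw [h1, dot_expand]
  ring

open MeasureTheory ProbabilityTheory in
lemma sgdas_step_bound {d m : ℕ} {Ω : Type*} [MeasurableSpace Ω] (μ : Measure Ω)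
    [IsProbabilityMeasure μ]
    (A : Matrix (Fin m) (Fin d) ℝ) (b : Fin m → ℝ) (c : ℝ) (vhat : Fin d → ℝ)
    (hvhat : A *ᵥ vhat = b) (hσ : 0 < sigmaMinPos A)
    (τ : ℝ) (hτ0 : 0 < τ) (htcn2 : τ * (c * matrixOpNorm A ^ 2) < 2)
    (w : Ω → Fin d → ℝ) (hwm : Measurable w)
    (xx : Ω → Fin d → ℝ) (hxxm : Measurable xx)
    (hIndep : IndepFun w xx μ)
    (hint2 : ∀ i j, Integrable (fun ω => xx ω i * xx ω j) μ)
    (hint4 : ∀ i j, Integrable (fun ω => xx ω i * xx ω j * (xx ω ⬝ᵥ xx ω)) μ)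
    (hiso : ∀ i j, ∫ ω, xx ω i * xx ω j ∂μ = if i = j then (1:ℝ) else 0)
    (h4 : ∀ i j, ∫ ω, xx ω i * xx ω j * (xx ω ⬝ᵥ xx ω) ∂μ = if i = j then c else 0)
    (hintRw : Integrable (fun ω => (A *ᵥ w ω - b) ⬝ᵥ (A *ᵥ w ω - b)) μ)
    (hintRnext : Integrable (fun ω =>
      (A *ᵥ (w ω - τ • (((A *ᵥ w ω - b) ⬝ᵥ A *ᵥ xx ω) • xx ω)) - b) ⬝ᵥ
      (A *ᵥ (w ω - τ • (((A *ᵥ w ω - b) ⬝ᵥ A *ᵥ xx ω) • xx ω)) - b)) μ) :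
    ∫ ω, (A *ᵥ (w ω - τ • (((A *ᵥ w ω - b) ⬝ᵥ A *ᵥ xx ω) • xx ω)) - b) ⬝ᵥ
      (A *ᵥ (w ω - τ • (((A *ᵥ w ω - b) ⬝ᵥ A *ᵥ xx ω) • xx ω)) - b) ∂μ
      ≤ (1 - τ * sigmaMinPos A ^ 2 * (2 - τ * c * matrixOpNorm A ^ 2)) *
        ∫ ω, (A *ᵥ w ω - b) ⬝ᵥ (A *ᵥ w ω - b) ∂μ := by
  classical
  have hRm : Measurable (fun ω => A *ᵥ w ω - b) := meas_affine A b hwm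
  have hRim : ∀ l, Measurable (fun ω => (A *ᵥ w ω - b) l) :=
    fun l => (measurable_pi_apply l).comp hRm
  have hum : Measurable (fun ω => Aᵀ *ᵥ (A *ᵥ w ω - b)) := meas_mulVec Aᵀ hRm
  have huim : ∀ i, Measurable (fun ω => (Aᵀ *ᵥ (A *ᵥ w ω - b)) i) :=
    fun i => (measurable_pi_apply i).comp hum
  -- integrability of products of residual entries
  have hRl2 : ∀ l, Integrable (fun ω => (A *ᵥ w ω - b) l * (A *ᵥ w ω - b) l) μ := by
    intro l
    apply hintRw.mono ((hRim l).mul (hRim l)).aestronglyMeasurable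
    filter_upwards with ω
    rw [Real.norm_eq_abs, Real.norm_eq_abs, abs_of_nonneg (mul_self_nonneg _),
      abs_of_nonneg (dotProduct_self_nonneg _)]
    exact Finset.single_le_sum (f := fun j => (A *ᵥ w ω - b) j * (A *ᵥ w ω - b) j)
      (fun j _ => mul_self_nonneg _) (Finset.mem_univ l)
  have hRll : ∀ l l', Integrable (fun ω => (A *ᵥ w ω - b) l * (A *ᵥ w ω - b) l') μ := by
    intro l l'
    have hadd : Integrable (fun ω => (A *ᵥ w ω - b) l * (A *ᵥ w ω - b) l
        + (A *ᵥ w ω - b) l' * (A *ᵥ w ω - b) l') μ := (hRl2 l).add (hRl2 l')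
    apply hadd.mono ((hRim l).mul (hRim l')).aestronglyMeasurable
    filter_upwards with ω
    rw [Real.norm_eq_abs, Real.norm_eq_abs, abs_of_nonneg
      (add_nonneg (mul_self_nonneg _) (mul_self_nonneg _) : (0:ℝ) ≤ (A *ᵥ w ω - b) l * (A *ᵥ w ω - b) l
        + (A *ᵥ w ω - b) l' * (A *ᵥ w ω - b) l')]
    exact abs_mul_le_add_sq _ _
  have huij : ∀ i j, Integrable
      (fun ω => (Aᵀ *ᵥ (A *ᵥ w ω - b)) i * (Aᵀ *ᵥ (A *ᵥ w ω - b)) j) μ := by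
    intro i j
    have hexp : (fun ω => (Aᵀ *ᵥ (A *ᵥ w ω - b)) i * (Aᵀ *ᵥ (A *ᵥ w ω - b)) j)
        = fun ω => ∑ l, ∑ l', (Aᵀ i l * Aᵀ j l')
            * ((A *ᵥ w ω - b) l * (A *ᵥ w ω - b) l') := by
      funext ω
      simp only [mulVec, dotProduct]
      rw [Finset.sum_mul_sum]
      exact Finset.sum_congr rfl fun l _ => Finset.sum_congr rfl fun l' _ => by ring
    rw [hexp]
    exact integrable_finset_sum _ fun l _ => integrable_finset_sum _ fun l' _ =>
      (hRll l l').const_mul _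
  have huu : Integrable
      (fun ω => (Aᵀ *ᵥ (A *ᵥ w ω - b)) ⬝ᵥ (Aᵀ *ᵥ (A *ᵥ w ω - b))) μ := by
    have h : (fun ω => (Aᵀ *ᵥ (A *ᵥ w ω - b)) ⬝ᵥ (Aᵀ *ᵥ (A *ᵥ w ω - b)))
        = fun ω => ∑ i, (Aᵀ *ᵥ (A *ᵥ w ω - b)) i * (Aᵀ *ᵥ (A *ᵥ w ω - b)) i :=
      funext fun ω => rfl
    rw [h]
    exact integrable_finset_sum _ fun i _ => huij i i
  -- independence
  have hIndepij : ∀ (i j : Fin d) (χ : (Fin d → ℝ) → ℝ), Measurable χ →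
      IndepFun (fun ω => (Aᵀ *ᵥ (A *ᵥ w ω - b)) i * (Aᵀ *ᵥ (A *ᵥ w ω - b)) j)
        (fun ω => χ (xx ω)) μ := by
    intro i j χ hχ
    have hψ : Measurable (fun vv : Fin d → ℝ =>
        (Aᵀ *ᵥ (A *ᵥ vv - b)) i * (Aᵀ *ᵥ (A *ᵥ vv - b)) j) :=
      ((measurable_pi_apply i).comp (meas_mulVec Aᵀ (meas_affine A b measurable_id))).mul
        ((measurable_pi_apply j).comp (meas_mulVec Aᵀ (meas_affine A b measurable_id)))
    exact hIndep.comp hψ hχ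
  have hmeas2 : ∀ i j : Fin d, Measurable (fun t : Fin d → ℝ => t i * t j) :=
    fun i j => (measurable_pi_apply i).mul (measurable_pi_apply j)
  have hmeas4 : ∀ i j : Fin d, Measurable (fun t : Fin d → ℝ => t i * t j * (t ⬝ᵥ t)) :=
    fun i j => (hmeas2 i j).mul (meas_dot measurable_id measurable_id)
  -- G in terms of u
  have hGu : ∀ ω, (A *ᵥ w ω - b) ⬝ᵥ (A *ᵥ xx ω)
      = (Aᵀ *ᵥ (A *ᵥ w ω - b)) ⬝ᵥ xx ω := by
    intro ω
    rw [dotProduct_mulVec, ← mulVec_transpose]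
  -- expansions of G² and G² * ‖x‖²
  have hexp2 : (fun ω => ((A *ᵥ w ω - b) ⬝ᵥ (A *ᵥ xx ω)) * ((A *ᵥ w ω - b) ⬝ᵥ (A *ᵥ xx ω)))
      = fun ω => ∑ i, ∑ j, ((Aᵀ *ᵥ (A *ᵥ w ω - b)) i * (Aᵀ *ᵥ (A *ᵥ w ω - b)) j)
          * (xx ω i * xx ω j) := by
    funext ω
    rw [hGu ω]
    simp only [dotProduct]
    rw [Finset.sum_mul_sum]
    exact Finset.sum_congr rfl fun i _ => Finset.sum_congr rfl fun j _ => by ring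
  have hexp4 : (fun ω => ((A *ᵥ w ω - b) ⬝ᵥ (A *ᵥ xx ω)) * ((A *ᵥ w ω - b) ⬝ᵥ (A *ᵥ xx ω))
        * (xx ω ⬝ᵥ xx ω))
      = fun ω => ∑ i, ∑ j, ((Aᵀ *ᵥ (A *ᵥ w ω - b)) i * (Aᵀ *ᵥ (A *ᵥ w ω - b)) j)
          * (xx ω i * xx ω j * (xx ω ⬝ᵥ xx ω)) := by
    funext ω
    rw [hGu ω]
    simp only [dotProduct]
    rw [Finset.sum_mul_sum]
    rw [Finset.sum_mul]
    refine Finset.sum_congr rfl fun i _ => ?_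
    rw [Finset.sum_mul]
    exact Finset.sum_congr rfl fun j _ => by ring
  have hterm2 : ∀ i j : Fin d, Integrable
      (fun ω => ((Aᵀ *ᵥ (A *ᵥ w ω - b)) i * (Aᵀ *ᵥ (A *ᵥ w ω - b)) j)
        * (xx ω i * xx ω j)) μ :=
    fun i j => (hIndepij i j _ (hmeas2 i j)).integrable_mul (huij i j) (hint2 i j)
  have hterm4 : ∀ i j : Fin d, Integrable
      (fun ω => ((Aᵀ *ᵥ (A *ᵥ w ω - b)) i * (Aᵀ *ᵥ (A *ᵥ w ω - b)) j)
        * (xx ω i * xx ω j * (xx ω ⬝ᵥ xx ω))) μ :=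
    fun i j => (hIndepij i j _ (hmeas4 i j)).integrable_mul (huij i j) (hint4 i j)
  have hGsqInt : Integrable (fun ω =>
      ((A *ᵥ w ω - b) ⬝ᵥ (A *ᵥ xx ω)) * ((A *ᵥ w ω - b) ⬝ᵥ (A *ᵥ xx ω))) μ := by
    rw [hexp2]
    exact integrable_finset_sum _ fun i _ => integrable_finset_sum _ fun j _ => hterm2 i j
  have hGxInt : Integrable (fun ω =>
      ((A *ᵥ w ω - b) ⬝ᵥ (A *ᵥ xx ω)) * ((A *ᵥ w ω - b) ⬝ᵥ (A *ᵥ xx ω))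
        * (xx ω ⬝ᵥ xx ω)) μ := by
    rw [hexp4]
    exact integrable_finset_sum _ fun i _ => integrable_finset_sum _ fun j _ => hterm4 i j
  -- the two moment identities
  have hGsq : ∫ ω, ((A *ᵥ w ω - b) ⬝ᵥ (A *ᵥ xx ω)) * ((A *ᵥ w ω - b) ⬝ᵥ (A *ᵥ xx ω)) ∂μ
      = ∫ ω, (Aᵀ *ᵥ (A *ᵥ w ω - b)) ⬝ᵥ (Aᵀ *ᵥ (A *ᵥ w ω - b)) ∂μ := by
    rw [hexp2, integral_double_sum μ _ hterm2]
    have hcollapse : ∀ i : Fin d, (∑ j, ∫ ω,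
        ((Aᵀ *ᵥ (A *ᵥ w ω - b)) i * (Aᵀ *ᵥ (A *ᵥ w ω - b)) j) * (xx ω i * xx ω j) ∂μ)
        = ∫ ω, (Aᵀ *ᵥ (A *ᵥ w ω - b)) i * (Aᵀ *ᵥ (A *ᵥ w ω - b)) i ∂μ := by
      intro i
      have hsp : ∀ j, ∫ ω,
          ((Aᵀ *ᵥ (A *ᵥ w ω - b)) i * (Aᵀ *ᵥ (A *ᵥ w ω - b)) j) * (xx ω i * xx ω j) ∂μ
          = (∫ ω, (Aᵀ *ᵥ (A *ᵥ w ω - b)) i * (Aᵀ *ᵥ (A *ᵥ w ω - b)) j ∂μ)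
            * (∫ ω, xx ω i * xx ω j ∂μ) := fun j =>
        (hIndepij i j _ (hmeas2 i j)).integral_fun_mul_eq_mul_integral (huij i j).aestronglyMeasurable (hint2 i j).aestronglyMeasurable
      simp only [hsp, hiso, mul_ite, mul_one, mul_zero]
      simp [Finset.sum_ite_eq]
    rw [Finset.sum_congr rfl fun i _ => hcollapse i,
      ← integral_finset_sum _ fun i (_ : i ∈ Finset.univ) => huij i i]
    rfl
  have hGsqX : ∫ ω, ((A *ᵥ w ω - b) ⬝ᵥ (A *ᵥ xx ω)) * ((A *ᵥ w ω - b) ⬝ᵥ (A *ᵥ xx ω))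
        * (xx ω ⬝ᵥ xx ω) ∂μ
      = c * ∫ ω, (Aᵀ *ᵥ (A *ᵥ w ω - b)) ⬝ᵥ (Aᵀ *ᵥ (A *ᵥ w ω - b)) ∂μ := by
    rw [hexp4, integral_double_sum μ _ hterm4]
    have hcollapse : ∀ i : Fin d, (∑ j, ∫ ω,
        ((Aᵀ *ᵥ (A *ᵥ w ω - b)) i * (Aᵀ *ᵥ (A *ᵥ w ω - b)) j)
          * (xx ω i * xx ω j * (xx ω ⬝ᵥ xx ω)) ∂μ)
        = c * ∫ ω, (Aᵀ *ᵥ (A *ᵥ w ω - b)) i * (Aᵀ *ᵥ (A *ᵥ w ω - b)) i ∂μ := by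
      intro i
      have hsp : ∀ j, ∫ ω,
          ((Aᵀ *ᵥ (A *ᵥ w ω - b)) i * (Aᵀ *ᵥ (A *ᵥ w ω - b)) j)
            * (xx ω i * xx ω j * (xx ω ⬝ᵥ xx ω)) ∂μ
          = (∫ ω, (Aᵀ *ᵥ (A *ᵥ w ω - b)) i * (Aᵀ *ᵥ (A *ᵥ w ω - b)) j ∂μ)
            * (∫ ω, xx ω i * xx ω j * (xx ω ⬝ᵥ xx ω) ∂μ) := fun j =>
        (hIndepij i j _ (hmeas4 i j)).integral_fun_mul_eq_mul_integral (huij i j).aestronglyMeasurable (hint4 i j).aestronglyMeasurable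
      simp only [hsp, h4, mul_ite, mul_zero]
      simp [Finset.sum_ite_eq, mul_comm]
    rw [Finset.sum_congr rfl fun i _ => hcollapse i, ← Finset.mul_sum,
      ← integral_finset_sum _ fun i (_ : i ∈ Finset.univ) => huij i i]
    rfl
  -- pointwise bound
  have hpt : ∀ ω, (A *ᵥ (w ω - τ • (((A *ᵥ w ω - b) ⬝ᵥ A *ᵥ xx ω) • xx ω)) - b) ⬝ᵥ
      (A *ᵥ (w ω - τ • (((A *ᵥ w ω - b) ⬝ᵥ A *ᵥ xx ω) • xx ω)) - b)
      ≤ (A *ᵥ w ω - b) ⬝ᵥ (A *ᵥ w ω - b)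
        - (2 * τ) * (((A *ᵥ w ω - b) ⬝ᵥ (A *ᵥ xx ω)) * ((A *ᵥ w ω - b) ⬝ᵥ (A *ᵥ xx ω)))
        + (τ ^ 2 * matrixOpNorm A ^ 2) * (((A *ᵥ w ω - b) ⬝ᵥ (A *ᵥ xx ω))
            * ((A *ᵥ w ω - b) ⬝ᵥ (A *ᵥ xx ω)) * (xx ω ⬝ᵥ xx ω)) := by
    intro ω
    rw [step_pointwise A b τ (w ω) (xx ω)]
    have hop := opnorm_bound A (xx ω)
    nlinarith [mul_nonneg (mul_nonneg (sq_nonneg τ)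
      (mul_self_nonneg ((A *ᵥ w ω - b) ⬝ᵥ (A *ᵥ xx ω)))) (sub_nonneg.mpr hop)]
  have hRHSint : Integrable (fun ω =>
      (A *ᵥ w ω - b) ⬝ᵥ (A *ᵥ w ω - b)
        - (2 * τ) * (((A *ᵥ w ω - b) ⬝ᵥ (A *ᵥ xx ω)) * ((A *ᵥ w ω - b) ⬝ᵥ (A *ᵥ xx ω)))
        + (τ ^ 2 * matrixOpNorm A ^ 2) * (((A *ᵥ w ω - b) ⬝ᵥ (A *ᵥ xx ω))
            * ((A *ᵥ w ω - b) ⬝ᵥ (A *ᵥ xx ω)) * (xx ω ⬝ᵥ xx ω))) μ :=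
    (hintRw.sub (hGsqInt.const_mul _)).add (hGxInt.const_mul _)
  have hmain := integral_mono hintRnext hRHSint hpt
  have hsub : Integrable (fun ω => (A *ᵥ w ω - b) ⬝ᵥ (A *ᵥ w ω - b)
      - (2 * τ) * (((A *ᵥ w ω - b) ⬝ᵥ (A *ᵥ xx ω)) * ((A *ᵥ w ω - b) ⬝ᵥ (A *ᵥ xx ω)))) μ :=
    hintRw.sub (hGsqInt.const_mul _)
  have hRHS : ∫ ω, ((A *ᵥ w ω - b) ⬝ᵥ (A *ᵥ w ω - b)
        - (2 * τ) * (((A *ᵥ w ω - b) ⬝ᵥ (A *ᵥ xx ω)) * ((A *ᵥ w ω - b) ⬝ᵥ (A *ᵥ xx ω)))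
        + (τ ^ 2 * matrixOpNorm A ^ 2) * (((A *ᵥ w ω - b) ⬝ᵥ (A *ᵥ xx ω))
            * ((A *ᵥ w ω - b) ⬝ᵥ (A *ᵥ xx ω)) * (xx ω ⬝ᵥ xx ω))) ∂μ
      = (∫ ω, (A *ᵥ w ω - b) ⬝ᵥ (A *ᵥ w ω - b) ∂μ)
        - (2 * τ) * ∫ ω, (Aᵀ *ᵥ (A *ᵥ w ω - b)) ⬝ᵥ (Aᵀ *ᵥ (A *ᵥ w ω - b)) ∂μ
        + (τ ^ 2 * matrixOpNorm A ^ 2)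
          * (c * ∫ ω, (Aᵀ *ᵥ (A *ᵥ w ω - b)) ⬝ᵥ (Aᵀ *ᵥ (A *ᵥ w ω - b)) ∂μ) := by
    rw [integral_add hsub (hGxInt.const_mul _), integral_sub hintRw (hGsqInt.const_mul _),
      integral_const_mul, integral_const_mul, hGsq, hGsqX]
  rw [hRHS] at hmain
  -- lower bound on ∫ ‖u‖²
  have hUlow : sigmaMinPos A ^ 2 * ∫ ω, (A *ᵥ w ω - b) ⬝ᵥ (A *ᵥ w ω - b) ∂μ
      ≤ ∫ ω, (Aᵀ *ᵥ (A *ᵥ w ω - b)) ⬝ᵥ (Aᵀ *ᵥ (A *ᵥ w ω - b)) ∂μ := by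
    rw [← integral_const_mul]
    apply integral_mono (hintRw.const_mul _) huu
    intro ω
    show sigmaMinPos A ^ 2 * ((A *ᵥ w ω - b) ⬝ᵥ (A *ᵥ w ω - b))
      ≤ (Aᵀ *ᵥ (A *ᵥ w ω - b)) ⬝ᵥ (Aᵀ *ᵥ (A *ᵥ w ω - b))
    have hRw : A *ᵥ w ω - b = A *ᵥ (w ω - vhat) := by
      rw [mulVec_sub, hvhat]
    rw [hRw]
    exact sigma_bound A hσ (w ω - vhat)
  have hInn : 0 ≤ ∫ ω, (A *ᵥ w ω - b) ⬝ᵥ (A *ᵥ w ω - b) ∂μ :=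
    integral_nonneg fun ω => dotProduct_self_nonneg _
  have hN2 : (0:ℝ) ≤ matrixOpNorm A ^ 2 := sq_nonneg _
  have h2p : 0 < 2 - τ * (c * matrixOpNorm A ^ 2) := by linarith
  have hcoef : 0 ≤ 2 * τ - τ ^ 2 * (c * matrixOpNorm A ^ 2) := by nlinarith
  have hstepU := mul_le_mul_of_nonneg_left hUlow hcoef
  nlinarith [hmain, hstepU]

open MeasureTheory ProbabilityTheory

/-- SGDAS on a consistent system with constant stepsize
`0 < τ < 2/(c‖A‖²)` satisfies `E(‖Av^{k+1} − b‖²) ≤ β E(‖Av^k − b‖²)` with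
`β = 1 − τ σ_min(A)²(2 − τ c‖A‖²)`; iterating, `E(‖Av^k − b‖²) ≤ β^k ‖Av^0 − b‖²`. -/
theorem sgdas_linear_residual_convergence
    {d m : ℕ} {Ω : Type*} [MeasurableSpace Ω] (μ : Measure Ω) [IsProbabilityMeasure μ]
    (A : Matrix (Fin m) (Fin d) ℝ) (b : Fin m → ℝ) (c : ℝ)
    (hcons : ∃ vhat : Fin d → ℝ, A.mulVec vhat = b)
    (hσ : 0 < sigmaMinPos A)
    (x : ℕ → Ω → Fin d → ℝ)
    (hxmeas : ∀ k, Measurable (x k))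
    (hindep : iIndepFun x μ)
    (hint2 : ∀ k i j, Integrable (fun ω => x k ω i * x k ω j) μ)
    (hint4 : ∀ k i j, Integrable (fun ω => x k ω i * x k ω j * (x k ω ⬝ᵥ x k ω)) μ)
    (hiso : ∀ k i j, ∫ ω, x k ω i * x k ω j ∂μ = if i = j then (1 : ℝ) else 0)
    (h4 : ∀ k i j, ∫ ω, x k ω i * x k ω j * (x k ω ⬝ᵥ x k ω) ∂μ = if i = j then c else 0)
    (τ : ℝ) (hτ0 : 0 < τ) (hτ2 : τ < 2 / (c * matrixOpNorm A ^ 2))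
    (v0 : Fin d → ℝ)
    (v : ℕ → Ω → Fin d → ℝ)
    (hv0 : ∀ ω, v 0 ω = v0)
    (hstep : ∀ k ω, v (k + 1) ω
        = v k ω - τ • (((A.mulVec (v k ω) - b) ⬝ᵥ A.mulVec (x k ω)) • x k ω))
    (hintR : ∀ k, Integrable
        (fun ω => (A.mulVec (v k ω) - b) ⬝ᵥ (A.mulVec (v k ω) - b)) μ)
    (β : ℝ) (hβ : β = 1 - τ * sigmaMinPos A ^ 2 * (2 - τ * c * matrixOpNorm A ^ 2)) :
    (∀ k, ∫ ω, (A.mulVec (v (k + 1) ω) - b) ⬝ᵥ (A.mulVec (v (k + 1) ω) - b) ∂μ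
        ≤ β * ∫ ω, (A.mulVec (v k ω) - b) ⬝ᵥ (A.mulVec (v k ω) - b) ∂μ) ∧
    (∀ k, ∫ ω, (A.mulVec (v k ω) - b) ⬝ᵥ (A.mulVec (v k ω) - b) ∂μ
        ≤ β ^ k * ((A.mulVec v0 - b) ⬝ᵥ (A.mulVec v0 - b))) := by
  classical
  obtain ⟨vhat, hvhat⟩ := hcons
  have hNnn : (0:ℝ) ≤ matrixOpNorm A := norm_nonneg _
  have hN2 : (0:ℝ) ≤ matrixOpNorm A ^ 2 := sq_nonneg _
  have hcN : 0 < c * matrixOpNorm A ^ 2 := by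
    by_contra h
    push_neg at h
    have := div_nonpos_of_nonneg_of_nonpos (by norm_num : (0:ℝ) ≤ 2) h
    linarith
  have htcn2 : τ * (c * matrixOpNorm A ^ 2) < 2 := (lt_div_iff₀ hcN).mp hτ2
  have h2p : 0 < 2 - τ * (c * matrixOpNorm A ^ 2) := by linarith
  have hd : 0 < d := dim_pos A hσ
  set i0 : Fin d := ⟨0, hd⟩ with hi0
  have hxm : ∀ k i, Measurable fun ω => x k ω i :=
    fun k i => (measurable_pi_apply i).comp (hxmeas k)
  -- `c ≥ 1`
  have hXi2_le : ∀ ω, x 0 ω i0 * x 0 ω i0 ≤ x 0 ω ⬝ᵥ x 0 ω := fun ω =>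
    Finset.single_le_sum (f := fun j => x 0 ω j * x 0 ω j)
      (fun j _ => mul_self_nonneg _) (Finset.mem_univ i0)
  have hX4int : Integrable (fun ω => (x 0 ω i0 * x 0 ω i0) * (x 0 ω i0 * x 0 ω i0)) μ := by
    apply (hint4 0 i0 i0).mono
      ((((hxm 0 i0).mul (hxm 0 i0)).mul ((hxm 0 i0).mul (hxm 0 i0))).aestronglyMeasurable)
    filter_upwards with ω
    have h1 : 0 ≤ x 0 ω i0 * x 0 ω i0 := mul_self_nonneg _
    have h2 : 0 ≤ x 0 ω ⬝ᵥ x 0 ω := dotProduct_self_nonneg _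
    simp only [Pi.mul_apply]
    rw [Real.norm_eq_abs, Real.norm_eq_abs, abs_of_nonneg (mul_nonneg h1 h1),
      abs_of_nonneg (mul_nonneg h1 h2)]
    exact mul_le_mul_of_nonneg_left (hXi2_le ω) h1
  have hc1 : 1 ≤ c := by
    have hexp : ∫ ω, (x 0 ω i0 * x 0 ω i0 - 1)^2 ∂μ
        = (∫ ω, (x 0 ω i0 * x 0 ω i0) * (x 0 ω i0 * x 0 ω i0) ∂μ)
          - 2 * (∫ ω, x 0 ω i0 * x 0 ω i0 ∂μ) + 1 := by
      have h6 : Integrable (fun ω => 2 * (x 0 ω i0 * x 0 ω i0)) μ :=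
        (hint2 0 i0 i0).const_mul 2
      have h5 : Integrable (fun ω =>
          (x 0 ω i0 * x 0 ω i0) * (x 0 ω i0 * x 0 ω i0)
            - 2 * (x 0 ω i0 * x 0 ω i0)) μ := hX4int.sub h6
      rw [show (fun ω => (x 0 ω i0 * x 0 ω i0 - 1)^2)
          = fun ω => ((x 0 ω i0 * x 0 ω i0) * (x 0 ω i0 * x 0 ω i0)
            - 2 * (x 0 ω i0 * x 0 ω i0)) + 1 from funext fun ω => by ring]
      rw [integral_add h5 (integrable_const 1),
        integral_sub hX4int h6, integral_const_mul, integral_const]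
      simp [measure_univ]
    have h0 : 0 ≤ ∫ ω, (x 0 ω i0 * x 0 ω i0 - 1)^2 ∂μ :=
      integral_nonneg fun ω => sq_nonneg _
    have hX2 : ∫ ω, x 0 ω i0 * x 0 ω i0 ∂μ = 1 := by simpa using hiso 0 i0 i0
    have hX4c : ∫ ω, x 0 ω i0 * x 0 ω i0 * (x 0 ω ⬝ᵥ x 0 ω) ∂μ = c := by
      simpa using h4 0 i0 i0
    have hle : ∫ ω, (x 0 ω i0 * x 0 ω i0) * (x 0 ω i0 * x 0 ω i0) ∂μ
        ≤ ∫ ω, x 0 ω i0 * x 0 ω i0 * (x 0 ω ⬝ᵥ x 0 ω) ∂μ :=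
      integral_mono hX4int (hint4 0 i0 i0)
        (fun ω => mul_le_mul_of_nonneg_left (hXi2_le ω) (mul_self_nonneg _))
    rw [hX2] at hexp
    rw [hX4c] at hle
    linarith
  have hβ0 : 0 ≤ β := by
    have hσN := sigma_le_opnorm A hσ
    have e1 : τ * sigmaMinPos A ^ 2 * (2 - τ * (c * matrixOpNorm A ^ 2))
        ≤ τ * matrixOpNorm A ^ 2 * (2 - τ * (c * matrixOpNorm A ^ 2)) := by
      nlinarith [mul_nonneg (mul_nonneg hτ0.le h2p.le) (sub_nonneg.mpr hσN)]
    have e2 : τ * matrixOpNorm A ^ 2 * (2 - τ * (c * matrixOpNorm A ^ 2))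
        ≤ τ * (c * matrixOpNorm A ^ 2) * (2 - τ * (c * matrixOpNorm A ^ 2)) := by
      nlinarith [mul_nonneg (sub_nonneg.mpr hc1)
        (mul_nonneg (mul_nonneg hτ0.le hN2) h2p.le)]
    have e3 : τ * (c * matrixOpNorm A ^ 2) * (2 - τ * (c * matrixOpNorm A ^ 2)) ≤ 1 := by
      nlinarith [sq_nonneg (1 - τ * (c * matrixOpNorm A ^ 2))]
    rw [hβ]
    nlinarith [e1, e2, e3]
  -- `v k` is a measurable function of `x 0, …, x (k-1)`
  have hvfun : ∀ k, ∃ φ : ({i // i ∈ Finset.range k} → (Fin d → ℝ)) → (Fin d → ℝ),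
      Measurable φ ∧ ∀ ω, v k ω = φ (fun i => x i.1 ω) := by
    intro k
    induction k with
    | zero => exact ⟨fun _ => v0, measurable_const, fun ω => hv0 ω⟩
    | succ k ih =>
      obtain ⟨φ, hφm, hφ⟩ := ih
      have hkmem : k ∈ Finset.range (k+1) := Finset.self_mem_range_succ k
      have hres : Measurable (fun t : ({i // i ∈ Finset.range (k+1)} → (Fin d → ℝ)) =>
          (fun i : {i // i ∈ Finset.range k} =>
            t ⟨i.1, Finset.mem_range.mpr (Nat.lt_succ_of_lt (Finset.mem_range.mp i.2))⟩)) :=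
        measurable_pi_lambda _ fun i => measurable_pi_apply _
      refine ⟨fun t => sgdasStep A b τ
        (φ (fun i : {i // i ∈ Finset.range k} =>
            t ⟨i.1, Finset.mem_range.mpr (Nat.lt_succ_of_lt (Finset.mem_range.mp i.2))⟩),
          t ⟨k, hkmem⟩), ?_, ?_⟩
      · exact (measurable_sgdasStep A b τ).comp ((hφm.comp hres).prodMk (measurable_pi_apply _))
      · intro ω
        rw [hstep k ω, hφ ω]
        rfl
  have hvm : ∀ k, Measurable (v k) := by
    intro k
    obtain ⟨φ, hφm, hφ⟩ := hvfun k
    have : v k = fun ω => φ (fun i => x i.1 ω) := funext hφ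
    rw [this]
    exact hφm.comp (measurable_pi_lambda _ fun i => hxmeas i.1)
  have hindepVk : ∀ k, IndepFun (v k) (x k) μ := by
    intro k
    obtain ⟨φ, hφm, hφ⟩ := hvfun k
    have h := hindep.indepFun_finset (Finset.range k) {k}
      (Finset.disjoint_left.mpr (by intro a ha hb; simp only [Finset.mem_range, Finset.mem_singleton] at ha hb; omega)) hxmeas
    have h2 := h.comp hφm
      (measurable_pi_apply (⟨k, Finset.mem_singleton_self k⟩ : ({k} : Finset ℕ)))
    have hv : v k = φ ∘ (fun ω (i : {i // i ∈ Finset.range k}) => x i.1 ω) := funext hφ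
    rw [hv]
    exact h2
  have hstepineq : ∀ k, ∫ ω, (A *ᵥ v (k+1) ω - b) ⬝ᵥ (A *ᵥ v (k+1) ω - b) ∂μ
      ≤ β * ∫ ω, (A *ᵥ v k ω - b) ⬝ᵥ (A *ᵥ v k ω - b) ∂μ := by
    intro k
    have hre : (fun ω => (A *ᵥ v (k+1) ω - b) ⬝ᵥ (A *ᵥ v (k+1) ω - b))
        = fun ω => (A *ᵥ (v k ω - τ • (((A *ᵥ v k ω - b) ⬝ᵥ A *ᵥ x k ω) • x k ω)) - b) ⬝ᵥ
          (A *ᵥ (v k ω - τ • (((A *ᵥ v k ω - b) ⬝ᵥ A *ᵥ x k ω) • x k ω)) - b) := by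
      funext ω
      rw [hstep k ω]
    have hnext : Integrable (fun ω =>
        (A *ᵥ (v k ω - τ • (((A *ᵥ v k ω - b) ⬝ᵥ A *ᵥ x k ω) • x k ω)) - b) ⬝ᵥ
        (A *ᵥ (v k ω - τ • (((A *ᵥ v k ω - b) ⬝ᵥ A *ᵥ x k ω) • x k ω)) - b)) μ := by
      rw [← hre]
      exact hintR (k+1)
    have hb := sgdas_step_bound μ A b c vhat hvhat hσ τ hτ0 htcn2 (v k) (hvm k) (x k)
      (hxmeas k) (hindepVk k) (fun i j => hint2 k i j) (fun i j => hint4 k i j)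
      (fun i j => hiso k i j) (fun i j => h4 k i j) (hintR k) hnext
    rw [hβ, hre]
    exact hb
  refine ⟨hstepineq, ?_⟩
  intro k
  induction k with
  | zero =>
    have h00 : (fun ω => (A *ᵥ v 0 ω - b) ⬝ᵥ (A *ᵥ v 0 ω - b))
        = fun _ => (A *ᵥ v0 - b) ⬝ᵥ (A *ᵥ v0 - b) := funext fun ω => by rw [hv0 ω]
    rw [h00, integral_const]
    simp [measure_univ]
  | succ k ih =>
    calc ∫ ω, (A *ᵥ v (k+1) ω - b) ⬝ᵥ (A *ᵥ v (k+1) ω - b) ∂μ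
        ≤ β * ∫ ω, (A *ᵥ v k ω - b) ⬝ᵥ (A *ᵥ v k ω - b) ∂μ := hstepineq k
      _ ≤ β * (β ^ k * ((A *ᵥ v0 - b) ⬝ᵥ (A *ᵥ v0 - b))) :=
          mul_le_mul_of_nonneg_left ih hβ0
      _ = β ^ (k+1) * ((A *ᵥ v0 - b) ⬝ᵥ (A *ᵥ v0 - b)) := by ring
end
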